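/- If (a,b) ∈ Ω₂ and (c,d) ∈ Ω₂ are such that M_{a,b}·M_{c,d}⁻¹ ∈ Γ_R, then (a,b) = (c,d). In other words, the map (a,b) ↦ M_{a,b}·Γ_R from Ω₂ to SL(2,ℝ)/Γ_R is injective. -/

import Mathlib

open Real Matrix Set

noncomputable section

abbrev SL2 := Matrix.SpecialLinearGroup (Fin 2) ℝ

/-- The first generator of the Veech group of the rotated surface 𝓛^R. -/
def RgenR : SL2 := ⟨!![1 + Real.sqrt 2, -1; 2 + Real.sqrt 2, -1], by
  rw [Matrix.det_fin_two_of]; ring⟩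

/-- The second (parabolic) generator of the Veech group of 𝓛^R. -/
def SgenR : SL2 := ⟨!![1, 1; 0, 1], by rw [Matrix.det_fin_two_of]; ring⟩

/-- The Veech group Γ_R of the rotated surface 𝓛^R. -/
def ΓR : Subgroup SL2 := Subgroup.closure {RgenR, SgenR}

/-- The matrix M_{a,b} = [[a,b],[0,a⁻¹]] as an element of SL(2,ℝ). -/
def Mab (a b : ℝ) (ha : a ≠ 0) : SL2 :=
  ⟨!![a, b; 0, a⁻¹], by rw [Matrix.det_fin_two_of]; field_simp <;> simp⟩

/-- The region Ω₂ = {(a,b) : 0 < a ≤ 1, 1 − a < b ≤ 1}. -/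
def Ω₂ : Set (ℝ × ℝ) := {p | 0 < p.1 ∧ p.1 ≤ 1 ∧ 1 - p.1 < p.2 ∧ p.2 ≤ 1}

lemma sq2 : Real.sqrt 2 * Real.sqrt 2 = 2 := Real.mul_self_sqrt (by norm_num)

def R2 : SL2 := ⟨!![1 + Real.sqrt 2, -Real.sqrt 2; 2 + 2*Real.sqrt 2, -1 - Real.sqrt 2], by
  rw [Matrix.det_fin_two_of]; nlinarith [sq2]⟩
def R3 : SL2 := ⟨!![1, -1; 2 + Real.sqrt 2, -1 - Real.sqrt 2], by
  rw [Matrix.det_fin_two_of]; nlinarith [sq2]⟩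
def R4 : SL2 := ⟨!![-1, 0; 0, -1], by rw [Matrix.det_fin_two_of]; ring⟩

lemma hR2 : RgenR * RgenR = R2 := by
  ext i j
  rw [Matrix.SpecialLinearGroup.coe_mul]
  fin_cases i <;> fin_cases j <;>
    simp [RgenR, R2, Matrix.mul_apply, Fin.sum_univ_two] <;> nlinarith [sq2]

lemma hR3 : R2 * RgenR = R3 := by
  ext i j
  rw [Matrix.SpecialLinearGroup.coe_mul]
  fin_cases i <;> fin_cases j <;>
    simp [RgenR, R2, R3, Matrix.mul_apply, Fin.sum_univ_two] <;> nlinarith [sq2]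

lemma hR4 : R3 * RgenR = R4 := by
  ext i j
  rw [Matrix.SpecialLinearGroup.coe_mul]
  fin_cases i <;> fin_cases j <;>
    simp [RgenR, R3, R4, Matrix.mul_apply, Fin.sum_univ_two] <;> nlinarith [sq2]

lemma R4_sq : R4 * R4 = 1 := by
  ext i j
  rw [Matrix.SpecialLinearGroup.coe_mul]
  fin_cases i <;> fin_cases j <;>
    simp [R4, Matrix.mul_apply, Fin.sum_univ_two]

lemma R4_comm (g : SL2) : R4 * g = g * R4 := by
  ext i j
  simp only [Matrix.SpecialLinearGroup.coe_mul]
  fin_cases i <;> fin_cases j <;>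
    simp [R4, Matrix.mul_apply, Fin.sum_univ_two]

lemma Rzpow4 : RgenR ^ (4:ℤ) = R4 := by
  have : RgenR ^ (4:ℤ) = RgenR ^ (4:ℕ) := zpow_natCast _ _
  rw [this, show (4:ℕ) = 3+1 from rfl, pow_succ, show (3:ℕ) = 2+1 from rfl, pow_succ, sq, hR2,
    hR3, hR4]

lemma R4_zpow (k : ℤ) : R4 ^ k = 1 ∨ R4 ^ k = R4 := by
  rcases Int.even_or_odd k with ⟨t, ht⟩ | ⟨t, ht⟩
  · left
    subst ht
    rw [← two_mul, _root_.zpow_mul, show (R4:SL2)^(2:ℤ) = R4 * R4 from zpow_two _, R4_sq, _root_.one_zpow]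
  · right
    subst ht
    rw [_root_.zpow_add, _root_.zpow_mul, show (R4:SL2)^(2:ℤ) = R4 * R4 from zpow_two _, R4_sq, _root_.one_zpow, one_mul,
      zpow_one]

lemma R4k_comm (k : ℤ) (g : SL2) : R4 ^ k * g = g * R4 ^ k := by
  rcases R4_zpow k with h | h <;> rw [h] <;> [group; exact R4_comm g]

lemma Rzpow4k (j : ℤ) : RgenR ^ (4*j) = R4 ^ j := by
  rw [_root_.zpow_mul, Rzpow4]

lemma Spow (m : ℤ) : (SgenR ^ m).1 = !![1, (m:ℝ); 0, 1] := by
  have hSinv : (SgenR⁻¹).1 = !![1, -1; 0, 1] := by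
    rw [Matrix.SpecialLinearGroup.SL2_inv_expl]
    ext i j; fin_cases i <;> fin_cases j <;> simp [SgenR]
  induction m using Int.induction_on with
  | zero => ext i j; fin_cases i <;> fin_cases j <;> simp
  | succ m ih =>
    have h : (SgenR ^ ((m:ℤ) + 1)).1 = (SgenR ^ (m:ℤ)).1 * SgenR.1 := by
      rw [_root_.zpow_add, zpow_one]; rfl
    rw [h, ih]
    ext i j
    fin_cases i <;> fin_cases j <;> simp [SgenR, Matrix.mul_apply, Fin.sum_univ_two] <;>
      push_cast <;> ring
  | pred m ih =>
    have h : (SgenR ^ ((-m:ℤ) - 1)).1 = (SgenR ^ (-m:ℤ)).1 * (SgenR⁻¹).1 := by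
      rw [sub_eq_add_neg, _root_.zpow_add, _root_.zpow_neg_one]; rfl
    rw [h, ih, hSinv]
    ext i j
    fin_cases i <;> fin_cases j <;> simp [Matrix.mul_apply, Fin.sum_univ_two] <;>
      push_cast <;> ring

/-- Leading-block state of a normal form word. -/
inductive St where
  | t : ℤ → St
  | w : ℤ → St

def StOk : St → Prop
  | .t _ => True
  | .w n => n ≠ 0

/-- Normal forms for elements of Γ_R. -/
inductive NF : St → SL2 → Prop where
  | triv (k m : ℤ) : NF (.t m) (R4 ^ k * SgenR ^ m)
  | cons (n b : ℤ) (hb : ¬ (4:ℤ) ∣ b) (st : St) (h : SL2) (hok : StOk st) (hh : NF st h) :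
      NF (.w n) (SgenR ^ n * RgenR ^ b * h)

lemma nf_R4mul (j : ℤ) {st : St} {g : SL2} (h : NF st g) : NF st (R4 ^ j * g) := by
  induction h with
  | triv k m =>
    rw [← mul_assoc, ← _root_.zpow_add]
    exact NF.triv _ m
  | cons n b hb st h hok hh ih =>
    have : R4 ^ j * (SgenR ^ n * RgenR ^ b * h) = SgenR ^ n * RgenR ^ b * (R4 ^ j * h) := by
      rw [← mul_assoc, ← mul_assoc, R4k_comm j (SgenR ^ n), mul_assoc (SgenR ^ n),
        R4k_comm j (RgenR ^ b), ← mul_assoc, mul_assoc]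
    rw [this]
    exact NF.cons n b hb st _ hok ih

lemma nf_one : NF (.t 0) 1 := by
  have := NF.triv 0 0
  rwa [zpow_zero, zpow_zero, one_mul] at this

lemma nf_Smul {st : St} {g : SL2} (m : ℤ) (h : NF st g) : ∃ st', NF st' (SgenR ^ m * g) := by
  induction h with
  | triv k m' =>
    refine ⟨.t (m + m'), ?_⟩
    have : SgenR ^ m * (R4 ^ k * SgenR ^ m') = R4 ^ k * SgenR ^ (m + m') := by
      rw [_root_.zpow_add, ← mul_assoc, ← R4k_comm k (SgenR ^ m), mul_assoc]
    rw [this]; exact NF.triv k _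
  | cons n b hb st h hok hh ih =>
    refine ⟨.w (m + n), ?_⟩
    have : SgenR ^ m * (SgenR ^ n * RgenR ^ b * h) = SgenR ^ (m + n) * RgenR ^ b * h := by
      rw [_root_.zpow_add]; group
    rw [this]; exact NF.cons _ b hb st h hok hh

lemma nf_Rmul {st : St} {g : SL2} (e : ℤ) (he : ¬ (4:ℤ) ∣ e) (h : NF st g) :
    ∃ st', NF st' (RgenR ^ e * g) := by
  induction h with
  | triv k m =>
    refine ⟨.w 0, ?_⟩
    have h1 : RgenR ^ e * (R4 ^ k * SgenR ^ m) = SgenR ^ (0:ℤ) * RgenR ^ e * (R4 ^ k * SgenR ^ m) := by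
      rw [zpow_zero, one_mul]
    rw [h1]
    exact NF.cons 0 e he (.t m) _ trivial (NF.triv k m)
  | cons n b hb st h hok hh ih =>
    by_cases hn : n = 0
    · subst hn
      by_cases hd : (4:ℤ) ∣ e + b
      · obtain ⟨j, hj⟩ := hd
        refine ⟨st, ?_⟩
        have : RgenR ^ e * (SgenR ^ (0:ℤ) * RgenR ^ b * h) = R4 ^ j * h := by
          rw [zpow_zero, one_mul, ← mul_assoc, ← _root_.zpow_add, hj, Rzpow4k]
        rw [this]
        exact nf_R4mul j hh
      · refine ⟨.w 0, ?_⟩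
        have : RgenR ^ e * (SgenR ^ (0:ℤ) * RgenR ^ b * h)
            = SgenR ^ (0:ℤ) * RgenR ^ (e + b) * h := by
          rw [zpow_zero, one_mul, one_mul, ← mul_assoc, ← _root_.zpow_add]
        rw [this]
        exact NF.cons 0 (e+b) hd st h hok hh
    · refine ⟨.w 0, ?_⟩
      have : RgenR ^ e * (SgenR ^ n * RgenR ^ b * h)
          = SgenR ^ (0:ℤ) * RgenR ^ e * (SgenR ^ n * RgenR ^ b * h) := by
        rw [zpow_zero, one_mul]
      rw [this]
      exact NF.cons 0 e he (.w n) _ hn (NF.cons n b hb st h hok hh)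

lemma gamma_nf {g : SL2} (h : g ∈ Subgroup.closure {RgenR, SgenR}) : ∃ st, NF st g := by
  induction h using Subgroup.closure_induction_left with
  | one => exact ⟨_, nf_one⟩
  | mul_left x hx y hy ih =>
    obtain ⟨st, hst⟩ := ih
    rcases hx with rfl | rfl
    · have := nf_Rmul 1 (by norm_num) hst
      rwa [zpow_one] at this
    · have := nf_Smul 1 hst
      rwa [zpow_one] at this
  | inv_mul_cancel x hx y hy ih =>
    obtain ⟨st, hst⟩ := ih
    rcases hx with rfl | rfl
    · have := nf_Rmul (-1) (by norm_num) hst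
      rwa [_root_.zpow_neg_one] at this
    · have := nf_Smul (-1) hst
      rwa [_root_.zpow_neg_one] at this

lemma sqrt2_gt_one : 1 < Real.sqrt 2 := by nlinarith [sq2, Real.sqrt_nonneg 2]


-- c = 1
lemma key1 (p q : ℝ) (h0 : p ≠ 0 ∨ q ≠ 0) (hY : p*q ≤ 0 ∨ (p - q)*q > 0) :
    ((1+Real.sqrt 2)*p + (-1)*q) * ((2+Real.sqrt 2)*p + (-1)*q) > 0 ∧
    (((1+Real.sqrt 2)*p + (-1)*q) - ((2+Real.sqrt 2)*p + (-1)*q)) *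
      ((2+Real.sqrt 2)*p + (-1)*q) ≤ 0 := by
  have hs := sq2
  have h1 := sqrt2_gt_one
  rcases hY with hY | hY
  · constructor
    · rcases h0 with h0 | h0
      · nlinarith [mul_self_pos.2 h0, sq_nonneg q,
          mul_nonneg (neg_nonneg.2 hY) (Real.sqrt_nonneg 2),
          mul_pos (mul_self_pos.2 h0) (show (0:ℝ) < Real.sqrt 2 by linarith)]
      · nlinarith [sq_nonneg p, mul_self_pos.2 h0,
          mul_nonneg (neg_nonneg.2 hY) (Real.sqrt_nonneg 2),
          mul_nonneg (sq_nonneg p) (Real.sqrt_nonneg 2)]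
    · nlinarith [sq_nonneg p, mul_nonneg (sq_nonneg p) (Real.sqrt_nonneg 2)]
  · have hpq : p*q > 0 := by nlinarith [sq_nonneg q]
    constructor
    · nlinarith [sq_nonneg (p - q), sq_nonneg q,
        mul_nonneg (sq_nonneg (p-q)) (Real.sqrt_nonneg 2),
        mul_nonneg (sq_nonneg q) (Real.sqrt_nonneg 2),
        mul_pos hpq (show p*q - q*q > 0 by nlinarith)]
    · nlinarith [mul_pos hpq (show p*q - q*q > 0 by nlinarith), sq_nonneg q,
        mul_pos hpq hpq, mul_nonneg (mul_nonneg hpq.le hpq.le) (Real.sqrt_nonneg 2)]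

-- c = 2
lemma key2 (p q : ℝ) (h0 : p ≠ 0 ∨ q ≠ 0) (hY : p*q ≤ 0 ∨ (p - q)*q > 0) :
    ((1+Real.sqrt 2)*p + (-Real.sqrt 2)*q) * ((2+2*Real.sqrt 2)*p + (-1-Real.sqrt 2)*q) > 0 ∧
    (((1+Real.sqrt 2)*p + (-Real.sqrt 2)*q) - ((2+2*Real.sqrt 2)*p + (-1-Real.sqrt 2)*q)) *
      ((2+2*Real.sqrt 2)*p + (-1-Real.sqrt 2)*q) ≤ 0 := by
  have hs := sq2
  have h1 := sqrt2_gt_one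
  rcases hY with hY | hY
  · constructor
    · rcases h0 with h0 | h0
      · nlinarith [sq_nonneg p, sq_nonneg q, mul_self_pos.2 h0]
      · nlinarith [sq_nonneg p, sq_nonneg q, mul_self_pos.2 h0]
    · nlinarith [sq_nonneg p, sq_nonneg q]
  · constructor
    · nlinarith [sq_nonneg (p - q), sq_nonneg q]
    · nlinarith [sq_nonneg (p - q), sq_nonneg q]

-- c = 3
lemma key3 (p q : ℝ) (h0 : p ≠ 0 ∨ q ≠ 0) (hY : p*q ≤ 0 ∨ (p - q)*q > 0) :
    (1*p + (-1)*q) * ((2+Real.sqrt 2)*p + (-1-Real.sqrt 2)*q) > 0 ∧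
    ((1*p + (-1)*q) - ((2+Real.sqrt 2)*p + (-1-Real.sqrt 2)*q)) *
      ((2+Real.sqrt 2)*p + (-1-Real.sqrt 2)*q) ≤ 0 := by
  have hs := sq2
  have h1 := sqrt2_gt_one
  rcases hY with hY | hY
  · constructor
    · rcases h0 with h0 | h0
      · nlinarith [sq_nonneg p, sq_nonneg q, mul_self_pos.2 h0]
      · nlinarith [sq_nonneg p, sq_nonneg q, mul_self_pos.2 h0]
    · nlinarith [sq_nonneg p, sq_nonneg q]
  · constructor
    · nlinarith [sq_nonneg (p - q), sq_nonneg q]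
    · nlinarith [sq_nonneg (p - q), sq_nonneg q]

lemma keyR (b : ℤ) (hb : ¬ (4:ℤ) ∣ b) (p q : ℝ) (h0 : p ≠ 0 ∨ q ≠ 0)
    (hY : p*q ≤ 0 ∨ (p - q)*q > 0) :
    ((RgenR^b).1 0 0 * p + (RgenR^b).1 0 1 * q) * ((RgenR^b).1 1 0 * p + (RgenR^b).1 1 1 * q) > 0 ∧
    (((RgenR^b).1 0 0 * p + (RgenR^b).1 0 1 * q) -
      ((RgenR^b).1 1 0 * p + (RgenR^b).1 1 1 * q)) *
      ((RgenR^b).1 1 0 * p + (RgenR^b).1 1 1 * q) ≤ 0 := by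
  set c : ℤ := b % 4 with hc
  set j : ℤ := b / 4 with hj
  clear_value c j
  have hbc : b = 4 * j + c := by rw [hc, hj]; omega
  have hcne : c ≠ 0 := by
    intro h
    apply hb
    omega
  have hc0 : 0 ≤ c := by omega
  have hc4 : c < 4 := by omega
  have hsplit : RgenR ^ b = R4 ^ j * RgenR ^ c := by
    rw [hbc, _root_.zpow_add, Rzpow4k]
  have hR4mat : (R4 : SL2).1 = -1 := by
    ext i j'; fin_cases i <;> fin_cases j' <;> simp [R4]
  have hCmat : (RgenR ^ c).1 = RgenR.1 ∨ (RgenR ^ c).1 = R2.1 ∨ (RgenR ^ c).1 = R3.1 := by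
    have : c = 1 ∨ c = 2 ∨ c = 3 := by omega
    rcases this with rfl | rfl | rfl
    · left; rw [zpow_one]
    · right; left
      rw [show (2:ℤ) = 1 + 1 by norm_num, _root_.zpow_add, zpow_one, hR2]
    · right; right
      rw [show (3:ℤ) = 1 + 1 + 1 by norm_num, _root_.zpow_add, _root_.zpow_add, zpow_one, hR2, hR3]
  have hA : (RgenR ^ b).1 = (RgenR ^ c).1 ∨ (RgenR ^ b).1 = -((RgenR ^ c).1) := by
    rcases R4_zpow j with h4 | h4
    · left; rw [hsplit, h4, one_mul]
    · right
      rw [hsplit, Matrix.SpecialLinearGroup.coe_mul, h4, hR4mat, neg_one_mul]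
  rcases hA with hA | hA <;> rcases hCmat with hC | hC | hC <;> rw [hA, hC] <;>
    simp only [RgenR, R2, R3, Matrix.neg_apply, Matrix.cons_val', Matrix.cons_val_zero,
      Matrix.cons_val_one, Matrix.head_cons, Matrix.head_fin_const, Matrix.empty_val',
      Matrix.cons_val_fin_one, Matrix.of_apply, neg_neg, neg_mul, mul_neg, neg_sub, neg_add_rev]
  · have h := key1 p q h0 hY
    exact ⟨by nlinarith [h.1], by nlinarith [h.2]⟩
  · have h := key2 p q h0 hY
    exact ⟨by nlinarith [h.1], by nlinarith [h.2]⟩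
  · have h := key3 p q h0 hY
    exact ⟨by nlinarith [h.1], by nlinarith [h.2]⟩
  · have h := key1 p q h0 hY
    exact ⟨by nlinarith [h.1], by nlinarith [h.2]⟩
  · have h := key2 p q h0 hY
    exact ⟨by nlinarith [h.1], by nlinarith [h.2]⟩
  · have h := key3 p q h0 hY
    exact ⟨by nlinarith [h.1], by nlinarith [h.2]⟩

def evalSpec : St → SL2 → Prop
  | .t m, g => ∃ k : ℤ, g = R4 ^ k * SgenR ^ m
  | .w n, g => (g.1 0 0 - (n:ℝ) * g.1 1 0) * g.1 1 0 > 0 ∧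
               (g.1 0 0 - ((n:ℝ)+1) * g.1 1 0) * g.1 1 0 ≤ 0

lemma nf_eval {st : St} {g : SL2} (h : NF st g) : evalSpec st g := by
  induction h with
  | triv k m => exact ⟨k, rfl⟩
  | cons n b hb st h hok hh ih =>
    set p : ℝ := h.1 0 0 with hp
    set q : ℝ := h.1 1 0 with hq
    have hdet : p * h.1 1 1 - h.1 0 1 * q = 1 := by
      have := h.2
      rw [Matrix.det_fin_two] at this
      linarith [this]
    have h0 : p ≠ 0 ∨ q ≠ 0 := by
      by_contra hcon
      push_neg at hcon
      rw [hcon.1, hcon.2] at hdet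
      simp at hdet
    have hY : p*q ≤ 0 ∨ (p - q)*q > 0 := by
      cases st with
      | t m =>
        obtain ⟨k, hk⟩ := ih
        have hq0 : q = 0 := by
          rw [hq, hk]
          rcases R4_zpow k with h4 | h4 <;>
            rw [h4, Matrix.SpecialLinearGroup.coe_mul] <;>
            simp [Matrix.SpecialLinearGroup.coe_mul, Spow m, Matrix.mul_apply,
              Fin.sum_univ_two, R4]
        left; rw [hq0]; simp
      | w n' =>
        have hn' : n' ≠ 0 := hok
        obtain ⟨ih1, ih2⟩ := ih
        rcases (by omega : (1:ℤ) ≤ n' ∨ n' ≤ -1) with hn | hn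
        · right
          have : (1:ℝ) ≤ (n':ℝ) := by exact_mod_cast hn
          nlinarith [ih1, sq_nonneg q]
        · left
          have : (n':ℝ) ≤ -1 := by exact_mod_cast hn
          nlinarith [ih2, sq_nonneg q]
    have key := keyR b hb p q h0 hY
    have hg : (SgenR ^ n * RgenR ^ b * h).1 = (SgenR ^ n).1 * ((RgenR ^ b).1 * h.1) := by
      rw [mul_assoc]; rfl
    have e10 : (SgenR ^ n * RgenR ^ b * h).1 1 0
        = (RgenR^b).1 1 0 * p + (RgenR^b).1 1 1 * q := by
      rw [hg, Spow n]
      simp [Matrix.mul_apply, Fin.sum_univ_two, hp, hq]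
    have e00 : (SgenR ^ n * RgenR ^ b * h).1 0 0
        = ((RgenR^b).1 0 0 * p + (RgenR^b).1 0 1 * q)
          + (n:ℝ) * ((RgenR^b).1 1 0 * p + (RgenR^b).1 1 1 * q) := by
      rw [hg, Spow n]
      simp [Matrix.mul_apply, Fin.sum_univ_two, hp, hq]
      try ring
    constructor
    · rw [e10, e00]
      nlinarith [key.1]
    · rw [e10, e00]
      nlinarith [key.2]


/-- The map (a,b) ↦ M_{a,b}·Γ_R from Ω₂ to SL(2,ℝ)/Γ_R is injective. -/
theorem Omega2_injective (a b c d : ℝ) (hab : (a, b) ∈ Ω₂) (hcd : (c, d) ∈ Ω₂)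
    (h : Mab a b (ne_of_gt hab.1) * (Mab c d (ne_of_gt hcd.1))⁻¹ ∈ ΓR) :
    (a, b) = (c, d) := by
  obtain ⟨ha0, ha1, hb0, hb1⟩ := hab
  obtain ⟨hc0, hc1, hd0, hd1⟩ := hcd
  set M : SL2 := Mab a b (ne_of_gt ha0) * (Mab c d (ne_of_gt hc0))⁻¹ with hMdef
  have hMmat : M.1 = (Mab a b (ne_of_gt ha0)).1 * ((Mab c d (ne_of_gt hc0))⁻¹).1 := rfl
  have hinv : ((Mab c d (ne_of_gt hc0))⁻¹).1 = !![c⁻¹, -d; 0, c] := by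
    rw [Matrix.SpecialLinearGroup.SL2_inv_expl]
    ext i j
    fin_cases i <;> fin_cases j <;> simp [Mab]
  have h10 : M.1 1 0 = 0 := by
    rw [hMmat, hinv]
    simp [Mab, Matrix.mul_apply, Fin.sum_univ_two]
  have h00 : M.1 0 0 = a * c⁻¹ := by
    rw [hMmat, hinv]
    simp [Mab, Matrix.mul_apply, Fin.sum_univ_two]
  have h01 : M.1 0 1 = b * c - a * d := by
    rw [hMmat, hinv]
    simp [Mab, Matrix.mul_apply, Fin.sum_univ_two]
    ring
  have h' : M ∈ Subgroup.closure {RgenR, SgenR} := h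
  obtain ⟨st, hst⟩ := gamma_nf h'
  have spec := nf_eval hst
  cases st with
  | w n =>
    exfalso
    obtain ⟨s1, _⟩ := spec
    rw [h10] at s1
    simp at s1
  | t m =>
    obtain ⟨k, hk⟩ := spec
    have hMk : M.1 = (R4 ^ k).1 * (SgenR ^ m).1 := by rw [hk]; rfl
    have hac : a = c ∧ (m : ℝ) = b * c - a * d := by
      rcases R4_zpow k with h4 | h4
      · rw [h4] at hMk
        simp only [Matrix.SpecialLinearGroup.coe_one, one_mul, Spow m] at hMk
        have e1 : a * c⁻¹ = 1 := by rw [← h00, hMk]; simp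
        have e2 : (m:ℝ) = b * c - a * d := by rw [← h01, hMk]; simp
        constructor
        · field_simp at e1; linarith
        · exact e2
      · exfalso
        rw [h4] at hMk
        have hR4mat : (R4 : SL2).1 = -1 := by
          ext i j'; fin_cases i <;> fin_cases j' <;> simp [R4]
        rw [hR4mat, Spow m] at hMk
        have e1 : a * c⁻¹ = -1 := by
          rw [← h00, hMk]; simp
        have : 0 < a * c⁻¹ := mul_pos ha0 (inv_pos.2 hc0)
        rw [e1] at this
        linarith
    obtain ⟨hac, hm⟩ := hac
    subst hac
    have hbd : b - d < a := by linarith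
    have hdb : -(a) < b - d := by linarith
    have habs : |(m:ℝ)| < 1 := by
      rw [hm, abs_lt]
      constructor <;> nlinarith
    have hm0 : m = 0 := by
      have h2 : (|m| : ℤ) < 1 := by exact_mod_cast habs
      have h3 := abs_lt.mp h2
      omega
    rw [hm0] at hm
    push_cast at hm
    have hbdeq : b = d := mul_left_cancel₀ (ne_of_gt ha0) (by linear_combination -hm)
    rw [hbdeq]
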